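/- For every real y, the planar 6-dimensional cosexponential function satisfies f_{6k}(y) = (1/6) \sum_{l=1}^{6} exp(y cos(\pi(2l-1)/6)) cos(y sin(\pi(2l-1)/6) - \pi(2l-1)k/6), for each k = 0,...,5. -/

import Mathlib

noncomputable def f6 (k : ℕ) (y : ℝ) : ℝ :=
  ∑' p : ℕ, (-1 : ℝ) ^ p * y ^ (k + 6 * p) / ((k + 6 * p).factorial : ℝ)

open Complex Finset

/-- The angle θ_l = π(2l-1)/6. -/
noncomputable def f6th (l : ℕ) : ℝ := Real.pi * (2 * (l : ℝ) - 1) / 6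

/-- The root ω_l = exp(i θ_l). -/
noncomputable def f6w (l : ℕ) : ℂ := Complex.exp ((f6th l : ℂ) * Complex.I)

lemma f6w_pow (l n : ℕ) : f6w l ^ n = Complex.exp ((n : ℂ) * (f6th l : ℂ) * Complex.I) := by
  rw [f6w, ← Complex.exp_nat_mul]
  ring_nf

lemma f6w_pow_six (l : ℕ) : f6w l ^ 6 = -1 := by
  rw [f6w_pow]
  have h : (6 : ℂ) * (f6th l : ℂ) * Complex.I
      = (l : ℂ) * (2 * (Real.pi : ℂ) * Complex.I) + (-((Real.pi : ℂ) * Complex.I)) := by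
    simp only [f6th]
    push_cast
    ring
  push_cast
  rw [h, Complex.exp_add, Complex.exp_nat_mul, Complex.exp_two_pi_mul_I, one_pow, one_mul,
    Complex.exp_neg, Complex.exp_pi_mul_I]
  norm_num

lemma f6w_ne_zero (l : ℕ) : f6w l ≠ 0 := Complex.exp_ne_zero _

/-- Case of equal residues: the root sum equals 6·(-1)^p. -/
lemma f6_root_sum_eq (p k : ℕ) :
    ∑ l ∈ Finset.Icc (1 : ℕ) 6, f6w l ^ (k + 6 * p) * (f6w l ^ k)⁻¹ = 6 * (-1 : ℂ) ^ p := by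
  have key : ∀ l ∈ Finset.Icc (1 : ℕ) 6,
      f6w l ^ (k + 6 * p) * (f6w l ^ k)⁻¹ = (-1 : ℂ) ^ p := by
    intro l _
    rw [pow_add, mul_comm (f6w l ^ k), mul_assoc,
      mul_inv_cancel₀ (pow_ne_zero _ (f6w_ne_zero l)), mul_one, pow_mul,
      f6w_pow_six]
  rw [Finset.sum_congr rfl key, Finset.sum_const, Nat.card_Icc]
  norm_num

/-- Case of distinct residues: the root sum vanishes. -/
lemma f6_root_sum_zero (n k : ℕ) (h : ¬ ((6 : ℤ) ∣ (n : ℤ) - (k : ℤ))) :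
    ∑ l ∈ Finset.Icc (1 : ℕ) 6, f6w l ^ n * (f6w l ^ k)⁻¹ = 0 := by
  set m : ℤ := (n : ℤ) - (k : ℤ) with hm
  have key : ∀ l, f6w l ^ n * (f6w l ^ k)⁻¹
      = Complex.exp ((m : ℂ) * (f6th l : ℂ) * Complex.I) := by
    intro l
    rw [f6w_pow, f6w_pow, ← Complex.exp_neg, ← Complex.exp_add]
    congr 1
    push_cast [hm]
    ring
  set ζ : ℂ := Complex.exp ((m : ℂ) * (Real.pi : ℂ) / 3 * Complex.I) with hζ
  have hIcc : Finset.Icc (1 : ℕ) 6 = Finset.image (· + 1) (Finset.range 6) := by decide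
  have hinj : Set.InjOn (· + 1) (Finset.range 6) := (add_left_injective 1).injOn
  have hterm : ∀ j : ℕ, Complex.exp ((m : ℂ) * (f6th (j + 1) : ℂ) * Complex.I)
      = Complex.exp ((m : ℂ) * (Real.pi : ℂ) / 6 * Complex.I) * ζ ^ j := by
    intro j
    rw [hζ, ← Complex.exp_nat_mul, ← Complex.exp_add]
    congr 1
    simp only [f6th]
    push_cast
    ring
  have hζ6 : ζ ^ 6 = 1 := by
    rw [hζ, ← Complex.exp_nat_mul]
    push_cast
    have : (6 : ℂ) * ((m : ℂ) * (Real.pi : ℂ) / 3 * Complex.I)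
        = (m : ℂ) * (2 * (Real.pi : ℂ) * Complex.I) := by ring
    rw [this, Complex.exp_int_mul_two_pi_mul_I]
  have hζ1 : ζ ≠ 1 := by
    intro h1
    rw [hζ, Complex.exp_eq_one_iff] at h1
    obtain ⟨j, hj⟩ := h1
    apply h
    have hπI : (Real.pi : ℂ) * Complex.I ≠ 0 :=
      mul_ne_zero (by exact_mod_cast Real.pi_ne_zero) Complex.I_ne_zero
    have h2 : (m : ℂ) * ((Real.pi : ℂ) * Complex.I)
        = ((6 * j : ℤ) : ℂ) * ((Real.pi : ℂ) * Complex.I) := by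
      push_cast
      linear_combination 3 * hj
    have h3 : (m : ℂ) = ((6 * j : ℤ) : ℂ) := mul_right_cancel₀ hπI h2
    exact ⟨j, by exact_mod_cast h3⟩
  calc ∑ l ∈ Finset.Icc (1 : ℕ) 6, f6w l ^ n * (f6w l ^ k)⁻¹
      = ∑ j ∈ Finset.range 6, Complex.exp ((m : ℂ) * (Real.pi : ℂ) / 6 * Complex.I) * ζ ^ j := by
        rw [hIcc, Finset.sum_image hinj]
        exact Finset.sum_congr rfl fun j _ => by rw [key, hterm]
    _ = Complex.exp ((m : ℂ) * (Real.pi : ℂ) / 6 * Complex.I) * ((ζ ^ 6 - 1) / (ζ - 1)) := by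
        rw [← Finset.mul_sum, geom_sum_eq hζ1]
    _ = 0 := by rw [hζ6]; simp

lemma f6_complex_sum (y : ℝ) (k : ℕ) (hk : k < 6) :
    (1 / 6 : ℂ) * ∑ l ∈ Finset.Icc (1 : ℕ) 6, Complex.exp ((y : ℂ) * f6w l) * (f6w l ^ k)⁻¹
      = ∑' p : ℕ, (-1 : ℂ) ^ p * (y : ℂ) ^ (k + 6 * p) / ((k + 6 * p).factorial : ℂ) := by
  have hexp : ∀ l ∈ Finset.Icc (1 : ℕ) 6, Complex.exp ((y : ℂ) * f6w l) * (f6w l ^ k)⁻¹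
      = ∑' n : ℕ, ((y : ℂ) ^ n / (n.factorial : ℂ)) * (f6w l ^ n * (f6w l ^ k)⁻¹) := by
    intro l _
    rw [Complex.exp_eq_exp_ℂ, NormedSpace.exp_eq_tsum_div, ← tsum_mul_right]
    congr 1
    ext n
    rw [mul_pow]
    ring
  have hsum : ∀ l ∈ Finset.Icc (1 : ℕ) 6,
      Summable (fun n : ℕ => ((y : ℂ) ^ n / (n.factorial : ℂ)) * (f6w l ^ n * (f6w l ^ k)⁻¹)) := by
    intro l _
    have h := (NormedSpace.expSeries_div_summable ((y : ℂ) * f6w l)).mul_right (f6w l ^ k)⁻¹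
    refine h.congr fun n => ?_
    rw [mul_pow]
    ring
  rw [Finset.sum_congr rfl hexp, ← Summable.tsum_finsetSum hsum]
  rw [← tsum_mul_left]
  set F : ℕ → ℂ := fun n => (1 / 6 : ℂ) * ∑ l ∈ Finset.Icc (1 : ℕ) 6,
      ((y : ℂ) ^ n / (n.factorial : ℂ)) * (f6w l ^ n * (f6w l ^ k)⁻¹) with hF
  have hinj : Function.Injective (fun p : ℕ => k + 6 * p) := fun a b hab => by dsimp only at hab; omega
  have hsupp : Function.support F ⊆ Set.range (fun p : ℕ => k + 6 * p) := by
    intro n hn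
    by_contra hnr
    apply hn
    have h6 : ¬ ((6 : ℤ) ∣ (n : ℤ) - (k : ℤ)) := by
      rintro ⟨j, hj⟩
      exact hnr ⟨j.toNat, by dsimp only; omega⟩
    have : ∑ l ∈ Finset.Icc (1 : ℕ) 6, ((y : ℂ) ^ n / (n.factorial : ℂ))
        * (f6w l ^ n * (f6w l ^ k)⁻¹)
        = ((y : ℂ) ^ n / (n.factorial : ℂ)) * ∑ l ∈ Finset.Icc (1 : ℕ) 6,
          f6w l ^ n * (f6w l ^ k)⁻¹ := by
      rw [Finset.mul_sum]
    simp only [hF, this, f6_root_sum_zero n k h6, mul_zero]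
  have hFval : ∀ p : ℕ, F (k + 6 * p)
      = (-1 : ℂ) ^ p * (y : ℂ) ^ (k + 6 * p) / ((k + 6 * p).factorial : ℂ) := by
    intro p
    rw [hF]
    simp only [← Finset.mul_sum]
    rw [f6_root_sum_eq p k]
    ring
  rw [← hinj.tsum_eq hsupp]
  exact tsum_congr hFval

lemma f6_term_re (y : ℝ) (k l : ℕ) :
    (Complex.exp ((y : ℂ) * f6w l) * (f6w l ^ k)⁻¹).re
      = Real.exp (y * Real.cos (f6th l))
        * Real.cos (y * Real.sin (f6th l) - k * f6th l) := by
  have h1 : (y : ℂ) * f6w l = ((y * Real.cos (f6th l) : ℝ) : ℂ)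
      + ((y * Real.sin (f6th l) : ℝ) : ℂ) * Complex.I := by
    rw [f6w, Complex.exp_mul_I, ← Complex.ofReal_cos, ← Complex.ofReal_sin]
    push_cast
    ring
  have h2 : Complex.exp ((y : ℂ) * f6w l) * (f6w l ^ k)⁻¹
      = ((Real.exp (y * Real.cos (f6th l)) : ℝ) : ℂ)
        * Complex.exp (((y * Real.sin (f6th l) - k * f6th l : ℝ) : ℂ) * Complex.I) := by
    rw [h1, f6w_pow, ← Complex.exp_neg, ← Complex.exp_add, Complex.ofReal_exp,
      ← Complex.exp_add]
    congr 1
    push_cast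
    ring
  rw [h2, Complex.re_ofReal_mul, Complex.exp_ofReal_mul_I_re]

theorem f6_trig_sum (y : ℝ) (k : ℕ) (hk : k < 6) :
    f6 k y = (1 / 6) * ∑ l ∈ Finset.Icc (1:ℕ) 6,
      Real.exp (y * Real.cos (Real.pi * (2 * (l:ℝ) - 1) / 6))
        * Real.cos (y * Real.sin (Real.pi * (2 * (l:ℝ) - 1) / 6) - Real.pi * (2 * (l:ℝ) - 1) * k / 6) := by
  have hC : ((f6 k y : ℝ) : ℂ)
      = ∑' p : ℕ, (-1 : ℂ) ^ p * (y : ℂ) ^ (k + 6 * p) / ((k + 6 * p).factorial : ℂ) := by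
    rw [f6, Complex.ofReal_tsum]
    exact tsum_congr fun p => by push_cast; ring
  rw [← f6_complex_sum y k hk] at hC
  have hre : f6 k y = ((1 / 6 : ℂ)
      * ∑ l ∈ Finset.Icc (1 : ℕ) 6, Complex.exp ((y : ℂ) * f6w l) * (f6w l ^ k)⁻¹).re := by
    rw [← hC, Complex.ofReal_re]
  rw [hre, show (1 / 6 : ℂ) = ((1 / 6 : ℝ) : ℂ) by norm_num, Complex.re_ofReal_mul,
    Complex.re_sum]
  congr 1
  refine Finset.sum_congr rfl fun l _ => ?_
  rw [f6_term_re]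
  rw [f6th]
  congr 2
  ring
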